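/- For all α, β, γ ∈ [0,1], the full-filtering survival rate S₁₁ = Tr[(√M₁ ⊗ √M₁) ρ' (√M₁ ⊗ √M₁)†], where M₁ = diag(β,α) so √M₁ = diag(√β,√α), equals (β²(1+γ²) + 2αβγ(1−γ) + α²(1−γ)²)/2. -/
import Mathlib


open Matrix Kronecker

/-- Amplitude-damping Kraus operator E₀ = [[1,0],[0,√(1−γ)]]. -/
noncomputable def E0 (γ : ℝ) : Matrix (Fin 2) (Fin 2) ℂ :=
  !![1, 0; 0, (Real.sqrt (1 - γ) : ℂ)]

/-- Amplitude-damping Kraus operator E₁ = [[0,√γ],[0,0]]. -/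
noncomputable def E1 (γ : ℝ) : Matrix (Fin 2) (Fin 2) ℂ :=
  !![0, (Real.sqrt γ : ℂ); 0, 0]

/-- The Bell state vector |Φ⁺⟩ = (|00⟩ + |11⟩)/√2, indexed by pairs (a,b) ∈ {0,1}². -/
noncomputable def phi : (Fin 2 × Fin 2) → ℂ :=
  fun p => if p.1 = p.2 then ((1 / Real.sqrt 2 : ℝ) : ℂ) else 0

/-- The Bell density matrix ρ = |Φ⁺⟩⟨Φ⁺|. -/
noncomputable def ρBell : Matrix (Fin 2 × Fin 2) (Fin 2 × Fin 2) ℂ :=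
  Matrix.vecMulVec phi (star phi)

/-- The family of amplitude-damping Kraus operators. -/
noncomputable def Ekraus (γ : ℝ) : Fin 2 → Matrix (Fin 2) (Fin 2) ℂ := ![E0 γ, E1 γ]

/-- The amplitude-damped Bell state
ρ' = Σ_{j,k} (E_j ⊗ E_k) ρ (E_j ⊗ E_k)†. -/
noncomputable def ρ' (γ : ℝ) : Matrix (Fin 2 × Fin 2) (Fin 2 × Fin 2) ℂ :=
  ∑ j : Fin 2, ∑ k : Fin 2,
    (Ekraus γ j ⊗ₖ Ekraus γ k) * ρBell * (Ekraus γ j ⊗ₖ Ekraus γ k)ᴴ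

/-- √M₁ = diag(√β, √α), the square root of the transmitting POVM element
M₁ = diag(β, α) of Gisin's local filter. -/
noncomputable def sqrtM1 (α β : ℝ) : Matrix (Fin 2) (Fin 2) ℂ :=
  !![(Real.sqrt β : ℂ), 0; 0, (Real.sqrt α : ℂ)]

set_option maxHeartbeats 2000000 in
/-- For all α, β, γ ∈ [0,1], the full-filtering survival rate
S₁₁ = Tr[(√M₁ ⊗ √M₁) ρ' (√M₁ ⊗ √M₁)†] equals
(β²(1+γ²) + 2αβγ(1−γ) + α²(1−γ)²)/2. -/
theorem full_filter_survival_rate (α β γ : ℝ)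
    (hα : α ∈ Set.Icc (0:ℝ) 1) (hβ : β ∈ Set.Icc (0:ℝ) 1)
    (hγ : γ ∈ Set.Icc (0:ℝ) 1) :
    ((sqrtM1 α β ⊗ₖ sqrtM1 α β) * ρ' γ * (sqrtM1 α β ⊗ₖ sqrtM1 α β)ᴴ).trace
      = (((β^2 * (1 + γ^2) + 2 * α * β * γ * (1 - γ) + α^2 * (1 - γ)^2) / 2 : ℝ) : ℂ) := by
  obtain ⟨ha0, ha1⟩ := hα; obtain ⟨hb0, hb1⟩ := hβ; obtain ⟨hg0, hg1⟩ := hγ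
  have h1g : (0:ℝ) ≤ 1 - γ := by linarith
  have sa : (Real.sqrt α) * Real.sqrt α = α := Real.mul_self_sqrt ha0
  have sb : (Real.sqrt β) * Real.sqrt β = β := Real.mul_self_sqrt hb0
  have sg : (Real.sqrt γ) * Real.sqrt γ = γ := Real.mul_self_sqrt hg0
  have s1g : (Real.sqrt (1-γ)) * Real.sqrt (1-γ) = 1 - γ := Real.mul_self_sqrt h1g
  have s2 : (Real.sqrt 2) * Real.sqrt 2 = 2 := Real.mul_self_sqrt (by norm_num)
  have h2 : Real.sqrt 2 ≠ 0 := by positivity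
  simp (config := { maxSteps := 10000000 }) only [ρ', ρBell, Ekraus, E0, E1, sqrtM1, phi, Matrix.trace, Matrix.diag,
    Matrix.mul_apply, Matrix.sum_apply, Matrix.add_apply, Matrix.of_apply, Matrix.conjTranspose_apply, Matrix.kroneckerMap_apply,
    Matrix.vecMulVec_apply, Pi.star_apply, Fin.sum_univ_two, Fintype.sum_prod_type,
    Prod.fst_zero, Prod.snd_zero, Matrix.cons_val', Matrix.cons_val_zero, Matrix.cons_val_one,
    Matrix.head_cons, Matrix.head_fin_const, Matrix.empty_val', Matrix.cons_val_fin_one,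
    Fin.isValue, Matrix.cons_val_one]
  norm_num
  field_simp
  ring_nf
  have eb : Real.sqrt β ^ 2 = β := Real.sq_sqrt hb0
  have ea : Real.sqrt α ^ 2 = α := Real.sq_sqrt ha0
  have eg : Real.sqrt γ ^ 2 = γ := Real.sq_sqrt hg0
  have e1g : Real.sqrt (1-γ) ^ 2 = 1 - γ := Real.sq_sqrt h1g
  have e2 : Real.sqrt 2 ^ 2 = 2 := Real.sq_sqrt (by norm_num)
  have hb4 : Real.sqrt β ^ 4 = β ^ 2 := by rw [show (4:ℕ) = 2*2 from rfl, pow_mul, eb]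
  have ha4 : Real.sqrt α ^ 4 = α ^ 2 := by rw [show (4:ℕ) = 2*2 from rfl, pow_mul, ea]
  have hg4 : Real.sqrt γ ^ 4 = γ ^ 2 := by rw [show (4:ℕ) = 2*2 from rfl, pow_mul, eg]
  have h1g4 : Real.sqrt (1-γ) ^ 4 = (1-γ) ^ 2 := by rw [show (4:ℕ) = 2*2 from rfl, pow_mul, e1g]
  norm_cast
  rw [eb, ea, eg, e1g, e2, hb4, ha4, hg4, h1g4]
  ring
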